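/- Let p > 0 and f : [0,1] → ℝ be continuous. Suppose that for each sufficiently small ε > 0, x^ε : [0,1] → ℝ is a twice continuously differentiable function satisfying ẍ^ε(t) = ε²·(p·x^ε(t) + f(t)) for all t ∈ [0,1] with periodic boundary conditions x^ε(0) = x^ε(1) and ẋ^ε(0) = ẋ^ε(1). Then sup_{0≤t≤1} |x^ε(t) + (1/p)·∫₀¹ f(s) ds| → 0 as ε → 0⁺. -/

import Mathlib

open Filter Set MeasureTheory

/-- FTC on a subinterval of `[0,1]`. -/
lemma ftc_Icc (g g' : ℝ → ℝ)
    (hg : ∀ t ∈ Set.Icc (0:ℝ) 1, HasDerivWithinAt g (g' t) (Set.Icc (0:ℝ) 1) t)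
    (hg' : ContinuousOn g' (Set.Icc (0:ℝ) 1))
    {a b : ℝ} (ha : a ∈ Set.Icc (0:ℝ) 1) (hb : b ∈ Set.Icc (0:ℝ) 1) :
    ∫ t in a..b, g' t = g b - g a := by
  have key : ∀ u v : ℝ, u ∈ Set.Icc (0:ℝ) 1 → v ∈ Set.Icc (0:ℝ) 1 → u ≤ v →
      ∫ t in u..v, g' t = g v - g u := by
    intro u v hu hv huv
    apply intervalIntegral.integral_eq_sub_of_hasDeriv_right_of_le huv
    · intro t ht
      exact ((hg t ⟨hu.1.trans ht.1, ht.2.trans hv.2⟩).continuousWithinAt).mono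
        (Set.Icc_subset_Icc hu.1 hv.2)
    · intro t ht
      have htI : t ∈ Set.Icc (0:ℝ) 1 := ⟨hu.1.trans ht.1.le, ht.2.le.trans hv.2⟩
      refine (hg t htI).mono_of_mem_nhdsWithin ?_
      exact Filter.mem_of_superset (Ioc_mem_nhdsGT_of_mem ⟨le_refl t, ht.2.trans_le hv.2⟩)
        (Set.Ioc_subset_Icc_self.trans (Set.Icc_subset_Icc (htI.1) (le_refl 1)))
    · refine ContinuousOn.intervalIntegrable (hg'.mono ?_)
      rw [Set.uIcc_of_le huv]
      exact Set.Icc_subset_Icc hu.1 hv.2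
  rcases le_total a b with h | h
  · exact key a b ha hb h
  · rw [intervalIntegral.integral_symm, key b a hb ha h]; ring

/-- a continuous function on `[0,1]` with zero integral vanishes somewhere. -/
lemma exists_zero_of_integral_zero (g : ℝ → ℝ) (hg : ContinuousOn g (Set.Icc (0:ℝ) 1))
    (h : ∫ t in (0:ℝ)..1, g t = 0) : ∃ t ∈ Set.Icc (0:ℝ) 1, g t = 0 := by
  have hint : IntervalIntegrable g volume 0 1 :=
    (hg.mono (by rw [Set.uIcc_of_le (by norm_num : (0:ℝ) ≤ 1)])).intervalIntegrable
  have ha : ∃ a ∈ Set.Icc (0:ℝ) 1, g a ≤ 0 := by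
    by_contra hc
    push_neg at hc
    have := intervalIntegral.intervalIntegral_pos_of_pos_on hint
      (fun t ht => hc t ⟨ht.1.le, ht.2.le⟩) (by norm_num)
    linarith [this, h.le]
  have hb : ∃ b ∈ Set.Icc (0:ℝ) 1, 0 ≤ g b := by
    by_contra hc
    push_neg at hc
    have hneg : ∀ t ∈ Set.Ioo (0:ℝ) 1, 0 < -g t := fun t ht =>
      neg_pos.2 (hc t ⟨ht.1.le, ht.2.le⟩)
    have := intervalIntegral.intervalIntegral_pos_of_pos_on hint.neg hneg (by norm_num)
    simp only [Pi.neg_apply] at this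
    rw [intervalIntegral.integral_neg, h] at this
    linarith
  obtain ⟨a, haI, hga⟩ := ha
  obtain ⟨b, hbI, hgb⟩ := hb
  have hsub : Set.uIcc a b ⊆ Set.Icc (0:ℝ) 1 := Set.uIcc_subset_Icc haI hbI
  have : (0:ℝ) ∈ Set.uIcc (g a) (g b) := Set.mem_uIcc.2 (Or.inl ⟨hga, hgb⟩)
  obtain ⟨t, htm, hgt⟩ := intermediate_value_uIcc (hg.mono hsub) this
  exact ⟨t, hsub htm, hgt⟩


lemma key_bound (p : ℝ) (hp : 0 < p) (f : ℝ → ℝ) (hf : ContinuousOn f (Set.Icc (0:ℝ) 1))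
    (M : ℝ) (hM : ∀ t ∈ Set.Icc (0:ℝ) 1, |f t| ≤ M)
    (ε : ℝ) (hε : 0 < ε) (hsmall : ε ^ 2 * p ≤ 1/2)
    (X X' X'' : ℝ → ℝ)
    (hd1 : ∀ t ∈ Set.Icc (0:ℝ) 1, HasDerivWithinAt X (X' t) (Set.Icc (0:ℝ) 1) t)
    (hd2 : ∀ t ∈ Set.Icc (0:ℝ) 1, HasDerivWithinAt X' (X'' t) (Set.Icc (0:ℝ) 1) t)
    (hc1 : ContinuousOn X' (Set.Icc (0:ℝ) 1))
    (hc2 : ContinuousOn X'' (Set.Icc (0:ℝ) 1))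
    (heq : ∀ t ∈ Set.Icc (0:ℝ) 1, X'' t = ε ^ 2 * (p * X t + f t))
    (hb1 : X 0 = X 1) (hb2 : X' 0 = X' 1) :
    ∀ t ∈ Set.Icc (0:ℝ) 1,
      |X t + (1/p) * ∫ s in (0:ℝ)..1, f s| ≤
        2 * ε ^ 2 * (p * |(1/p) * ∫ s in (0:ℝ)..1, f s| + M) := by
  set c : ℝ := (1/p) * ∫ s in (0:ℝ)..1, f s with hc
  have h01 : (0:ℝ) ∈ Set.Icc (0:ℝ) 1 := by norm_num
  have h11 : (1:ℝ) ∈ Set.Icc (0:ℝ) 1 := by norm_num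
  have huIcc : Set.uIcc (0:ℝ) 1 = Set.Icc (0:ℝ) 1 := Set.uIcc_of_le (by norm_num)
  have hcX : ContinuousOn X (Set.Icc (0:ℝ) 1) := fun t ht => (hd1 t ht).continuousWithinAt
  have hintf : IntervalIntegrable f volume 0 1 := (hf.mono (by rw [huIcc])).intervalIntegrable
  have hintX : IntervalIntegrable X volume 0 1 := (hcX.mono (by rw [huIcc])).intervalIntegrable
  -- Step A: integral of X'' vanishes, hence ∫ X = -c
  have hIX'' : ∫ t in (0:ℝ)..1, X'' t = 0 := by
    rw [ftc_Icc X' X'' hd2 hc2 h01 h11, hb2]; ring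
  have hIX : ∫ t in (0:ℝ)..1, X t = -c := by
    have hcongr : ∫ t in (0:ℝ)..1, X'' t
        = ∫ t in (0:ℝ)..1, ε ^ 2 * (p * X t + f t) := by
      apply intervalIntegral.integral_congr
      rw [huIcc]; exact fun t ht => heq t ht
    have hsplit : ∫ t in (0:ℝ)..1, ε ^ 2 * (p * X t + f t)
        = ε ^ 2 * ((p * ∫ t in (0:ℝ)..1, X t) + ∫ t in (0:ℝ)..1, f t) := by
      rw [intervalIntegral.integral_const_mul,
        intervalIntegral.integral_add (hintX.const_mul p) hintf,
        intervalIntegral.integral_const_mul]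
    have h0 : ε ^ 2 * ((p * ∫ t in (0:ℝ)..1, X t) + ∫ t in (0:ℝ)..1, f t) = 0 := by
      rw [← hsplit, ← hcongr, hIX'']
    have hε2 : ε ^ 2 ≠ 0 := by positivity
    have := mul_eq_zero.1 h0
    rcases this with h | h
    · exact absurd h hε2
    · have hpc : p * (-c) = -∫ t in (0:ℝ)..1, f t := by
        rw [hc]; field_simp
      have hgoal : p * ∫ t in (0:ℝ)..1, X t = p * (-c) := by
        rw [hpc]; linarith
      exact mul_left_cancel₀ hp.ne' hgoal
  -- Step C: y = X + c vanishes somewhere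
  have hIy : ∫ t in (0:ℝ)..1, (X t + c) = 0 := by
    rw [intervalIntegral.integral_add hintX intervalIntegrable_const, hIX,
      intervalIntegral.integral_const]
    simp
  obtain ⟨t₀, ht₀, hyt₀⟩ := exists_zero_of_integral_zero (fun t => X t + c)
    (hcX.add continuousOn_const) hIy
  -- Step B: X' vanishes somewhere
  have hIX' : ∫ t in (0:ℝ)..1, X' t = 0 := by
    rw [ftc_Icc X X' hd1 hc1 h01 h11, hb1]; ring
  obtain ⟨t₁, ht₁, hX't₁⟩ := exists_zero_of_integral_zero X' hc1 hIX'
  -- Max of |y|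
  obtain ⟨ts, hts, hmax⟩ := isCompact_Icc.exists_isMaxOn ⟨0, h01⟩
    ((hcX.add continuousOn_const).abs)
  set S : ℝ := |X ts + c| with hS
  have hSnn : 0 ≤ S := abs_nonneg _
  have hmax' : ∀ t ∈ Set.Icc (0:ℝ) 1, |X t + c| ≤ S := fun t ht => hmax ht
  set C : ℝ := p * |c| + M with hCdef
  set B : ℝ := ε ^ 2 * (p * S + C) with hB
  have hBnn : 0 ≤ B := by
    have hM0 : 0 ≤ M := (abs_nonneg _).trans (hM 0 h01)
    have : 0 ≤ C := by positivity
    positivity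
  -- pointwise bound on X''
  have hX''bd : ∀ s ∈ Set.Icc (0:ℝ) 1, |X'' s| ≤ B := by
    intro s hs
    rw [heq s hs, abs_mul, abs_pow, abs_of_pos hε, hB]
    have h1 : |p * X s + f s| ≤ p * S + C := by
      have : p * X s + f s = p * (X s + c) + (f s - p * c) := by ring
      rw [this]
      calc |p * (X s + c) + (f s - p * c)| ≤ |p * (X s + c)| + |f s - p * c| := abs_add_le _ _
        _ ≤ p * S + (M + p * |c|) := by
            gcongr
            · rw [abs_mul, abs_of_pos hp]
              exact mul_le_mul_of_nonneg_left (hmax' s hs) hp.le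
            · calc |f s - p * c| ≤ |f s| + |p * c| := abs_sub _ _
                _ ≤ M + p * |c| := by
                    rw [abs_mul, abs_of_pos hp]
                    gcongr
                    exact hM s hs
        _ = p * S + C := by rw [hCdef]; ring
    exact mul_le_mul_of_nonneg_left h1 (by positivity)
  -- interval bound helper
  have hsubI : ∀ a b : ℝ, a ∈ Set.Icc (0:ℝ) 1 → b ∈ Set.Icc (0:ℝ) 1 →
      Set.uIoc a b ⊆ Set.Icc (0:ℝ) 1 := by
    intro a b ha hb
    exact Set.uIoc_subset_uIcc.trans (Set.uIcc_subset_Icc ha hb)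
  have habs1 : ∀ a b : ℝ, a ∈ Set.Icc (0:ℝ) 1 → b ∈ Set.Icc (0:ℝ) 1 → |a - b| ≤ 1 := by
    intro a b ha hb
    rw [abs_sub_le_iff]
    constructor <;> linarith [ha.1, ha.2, hb.1, hb.2]
  -- bound on X'
  have hX'bd : ∀ t ∈ Set.Icc (0:ℝ) 1, |X' t| ≤ B := by
    intro t ht
    have hft : ∫ s in t₁..t, X'' s = X' t - X' t₁ := ftc_Icc X' X'' hd2 hc2 ht₁ ht
    have hbd : |∫ s in t₁..t, X'' s| ≤ B * |t - t₁| := by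
      rw [← Real.norm_eq_abs]
      apply intervalIntegral.norm_integral_le_of_norm_le_const
      intro s hs
      rw [Real.norm_eq_abs]
      exact hX''bd s (hsubI t₁ t ht₁ ht hs)
    calc |X' t| = |X' t - X' t₁| := by rw [hX't₁, sub_zero]
      _ = |∫ s in t₁..t, X'' s| := by rw [hft]
      _ ≤ B * |t - t₁| := hbd
      _ ≤ B * 1 := mul_le_mul_of_nonneg_left (habs1 t t₁ ht ht₁) hBnn
      _ = B := mul_one B
  -- bound on y = X + c
  have hybd : ∀ t ∈ Set.Icc (0:ℝ) 1, |X t + c| ≤ B := by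
    intro t ht
    have hft : ∫ s in t₀..t, X' s = X t - X t₀ := ftc_Icc X X' hd1 hc1 ht₀ ht
    have hbd : |∫ s in t₀..t, X' s| ≤ B * |t - t₀| := by
      rw [← Real.norm_eq_abs]
      apply intervalIntegral.norm_integral_le_of_norm_le_const
      intro s hs
      rw [Real.norm_eq_abs]
      exact hX'bd s (hsubI t₀ t ht₀ ht hs)
    have heq' : X t + c = X t - X t₀ := by
      have : X t₀ + c = 0 := hyt₀
      linarith
    calc |X t + c| = |∫ s in t₀..t, X' s| := by rw [heq', hft]
      _ ≤ B * |t - t₀| := hbd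
      _ ≤ B * 1 := mul_le_mul_of_nonneg_left (habs1 t t₀ ht ht₀) hBnn
      _ = B := mul_one B
  -- conclude S ≤ 2 ε² C
  have hSB : S ≤ B := hybd ts hts
  have hSS : S ≤ 2 * ε ^ 2 * C := by
    have h1 : ε ^ 2 * p * S ≤ (1/2) * S := mul_le_mul_of_nonneg_right hsmall hSnn
    have h2 : B = ε ^ 2 * p * S + ε ^ 2 * C := by rw [hB]; ring
    nlinarith [hSB]
  intro t ht
  exact (hmax' t ht).trans hSS

/-- if for each sufficiently small `ε > 0` the function `x^ε` is a
C² solution of `ẍ^ε = ε²(p·x^ε + f)` on `[0,1]` with periodic boundary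
conditions `x^ε(0) = x^ε(1)`, `ẋ^ε(0) = ẋ^ε(1)`, then `x^ε` converges uniformly
on `[0,1]` to the constant `−(1/p)∫₀¹ f(s) ds` as `ε → 0⁺`. -/
theorem periodic_averaging_limit (p : ℝ) (hp : 0 < p)
    (f : ℝ → ℝ) (hf : ContinuousOn f (Set.Icc (0:ℝ) 1))
    (x x' x'' : ℝ → ℝ → ℝ) (ε₁ : ℝ) (hε₁ : 0 < ε₁)
    (hsol : ∀ ε ∈ Set.Ioc (0:ℝ) ε₁,
      (∀ t ∈ Set.Icc (0:ℝ) 1, HasDerivWithinAt (x ε) (x' ε t) (Set.Icc (0:ℝ) 1) t) ∧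
      (∀ t ∈ Set.Icc (0:ℝ) 1, HasDerivWithinAt (x' ε) (x'' ε t) (Set.Icc (0:ℝ) 1) t) ∧
      ContinuousOn (x' ε) (Set.Icc (0:ℝ) 1) ∧
      ContinuousOn (x'' ε) (Set.Icc (0:ℝ) 1) ∧
      (∀ t ∈ Set.Icc (0:ℝ) 1, x'' ε t = ε ^ 2 * (p * x ε t + f t)) ∧
      x ε 0 = x ε 1 ∧ x' ε 0 = x' ε 1) :
    Tendsto
      (fun ε : ℝ => ⨆ t : Set.Icc (0:ℝ) 1,
        |x ε t + (1 / p) * ∫ s in (0:ℝ)..1, f s|)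
      (nhdsWithin 0 (Set.Ioi 0)) (nhds 0) := by
  obtain ⟨M, hM⟩ := isCompact_Icc.exists_bound_of_continuousOn hf
  simp only [Real.norm_eq_abs] at hM
  set C : ℝ := p * |(1 / p) * ∫ s in (0:ℝ)..1, f s| + M with hCdef
  haveI : Nonempty (Set.Icc (0:ℝ) 1) := ⟨⟨0, by norm_num⟩⟩
  set δ : ℝ := min ε₁ (Real.sqrt (1 / (2 * p))) with hδ
  have hδpos : 0 < δ := lt_min hε₁ (Real.sqrt_pos.2 (by positivity))
  have hmem : Set.Ioo (0:ℝ) δ ∈ nhdsWithin (0:ℝ) (Set.Ioi 0) :=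
    Ioo_mem_nhdsGT_of_mem ⟨le_refl 0, hδpos⟩
  apply squeeze_zero' (g := fun ε : ℝ => 2 * ε ^ 2 * C)
  · exact Filter.Eventually.of_forall fun ε => Real.iSup_nonneg fun t => abs_nonneg _
  · filter_upwards [hmem] with ε hε
    have hε0 : 0 < ε := hε.1
    have hεε₁ : ε ≤ ε₁ := hε.2.le.trans (min_le_left _ _)
    have hsmall : ε ^ 2 * p ≤ 1/2 := by
      have h1 : ε ≤ Real.sqrt (1 / (2 * p)) := hε.2.le.trans (min_le_right _ _)
      have h2 : ε ^ 2 ≤ 1 / (2 * p) := by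
        have := Real.sq_sqrt (by positivity : (0:ℝ) ≤ 1 / (2 * p))
        nlinarith [Real.sqrt_nonneg (1 / (2 * p))]
      calc ε ^ 2 * p ≤ (1 / (2 * p)) * p := mul_le_mul_of_nonneg_right h2 hp.le
        _ = 1/2 := by field_simp
    obtain ⟨hd1, hd2, hc1, hc2, heq, hb1, hb2⟩ := hsol ε ⟨hε0, hεε₁⟩
    have key := key_bound p hp f hf M hM ε hε0 hsmall (x ε) (x' ε) (x'' ε)
      hd1 hd2 hc1 hc2 heq hb1 hb2
    apply ciSup_le
    intro t
    calc |x ε t + (1 / p) * ∫ s in (0:ℝ)..1, f s|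
        ≤ 2 * ε ^ 2 * (p * |(1 / p) * ∫ s in (0:ℝ)..1, f s| + M) := key t t.2
      _ = 2 * ε ^ 2 * C := by rw [hCdef]
  · have hcont : Continuous fun ε : ℝ => 2 * ε ^ 2 * C := by continuity
    have h0 : Tendsto (fun ε : ℝ => 2 * ε ^ 2 * C) (nhdsWithin 0 (Set.Ioi 0)) (nhds (2 * 0 ^ 2 * C)) :=
      (hcont.tendsto 0).mono_left nhdsWithin_le_nhds
    simpa using h0
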